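/- For every integer k ≥ 1 there is a constant C = C(k) > 0 such that the following holds for every finite field 𝔽_q: if P ∈ 𝔽_q[x₁,x₂,x₃] is a nonzero homogeneous polynomial of degree k whose variety H = {x ∈ 𝔽_q³ : P(x) = 0} contains no plane through the origin, then for every ξ ∈ 𝔽_q³ ∖ {0} one has |{(x,y) ∈ H × H : x + y = ξ}| ≤ C·q; equivalently, |H ∩ (H + ξ)| ≤ C·q, where H + ξ = {x + ξ : x ∈ H}. -/

import Mathlib

open Finset MvPolynomial

lemma aux_sum3 {M : Type*} [AddCommMonoid M] (f : Fin 3 → M) (i j l : Fin 3)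
    (hij : i ≠ j) (hil : i ≠ l) (hjl : j ≠ l) : ∑ r, f r = f i + f j + f l := by
  have h : (Finset.univ : Finset (Fin 3)) = {i, j, l} := by
    revert hij hil hjl; fin_cases i <;> fin_cases j <;> fin_cases l <;> decide
  rw [h, Finset.sum_insert (by simp [hij, hil]), Finset.sum_insert (by simp [hjl]),
    Finset.sum_singleton, add_assoc]

lemma aux_cover : ∀ i j : Fin 3, i ≠ j →
    (i ≠ -(i+j) ∧ j ≠ -(i+j) ∧ ∀ r, r = i ∨ r = j ∨ r = -(i+j)) := by decide

lemma aux_eval_smul {F : Type*} [CommRing F] {k : ℕ} {P : MvPolynomial (Fin 3) F}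
    (hP : P.IsHomogeneous k) (c : F) (x : Fin 3 → F) :
    eval (c • x) P = c ^ k * eval x P := by
  rw [MvPolynomial.eval_eq, MvPolynomial.eval_eq, Finset.mul_sum]
  refine Finset.sum_congr rfl fun d hd => ?_
  have hdeg : d.degree = k := by
    by_contra h
    exact MvPolynomial.mem_support_iff.mp hd (hP.coeff_eq_zero h)
  have : ∏ i ∈ d.support, (c • x) i ^ d i = c ^ k * ∏ i ∈ d.support, x i ^ d i := by
    simp only [Pi.smul_apply, smul_eq_mul, mul_pow, Finset.prod_mul_distrib,
      Finset.prod_pow_eq_pow_sum]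
    rw [show ∑ i ∈ d.support, d i = k from hdeg]
  rw [this]; ring

lemma aux_aeval_eq_eval {F : Type*} [Field F] (g : Fin 3 → F) (P : MvPolynomial (Fin 3) F) :
    MvPolynomial.aeval g P = MvPolynomial.eval g P := by
  rw [MvPolynomial.aeval_eq_eval₂Hom, Algebra.algebraMap_self]
  rfl

lemma aux_line_poly {F : Type*} [Field F] {k : ℕ} {P : MvPolynomial (Fin 3) F}
    (hP : P.IsHomogeneous k) (w₁ w₂ : Fin 3 → F) :
    ∃ h : Polynomial F, h.natDegree ≤ k ∧
      ∀ u : F, h.eval u = MvPolynomial.eval (u • w₁ + w₂) P := by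
  refine ⟨MvPolynomial.aeval
      (fun j => Polynomial.C (w₁ j) * Polynomial.X + Polynomial.C (w₂ j)) P, ?_, ?_⟩
  · have := MvPolynomial.aeval_natDegree_le P hP.totalDegree_le
      (fun j => Polynomial.C (w₁ j) * Polynomial.X + Polynomial.C (w₂ j))
      (fun j => Polynomial.natDegree_linear_le)
    simpa using this
  · intro u
    have e1 := MvPolynomial.comp_aeval_apply
      (f := fun j => Polynomial.C (w₁ j) * Polynomial.X + Polynomial.C (w₂ j))
      (Polynomial.aeval u) P
    rw [Polynomial.coe_aeval_eq_eval] at e1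
    rw [e1]
    have e2 : (fun j => Polynomial.eval u
        (Polynomial.C (w₁ j) * Polynomial.X + Polynomial.C (w₂ j)))
        = fun j => (u • w₁ + w₂) j := by
      funext j
      simp only [Polynomial.eval_add, Polynomial.eval_mul, Polynomial.eval_C,
        Polynomial.eval_X, Pi.add_apply, Pi.smul_apply, smul_eq_mul]
      ring
    rw [e2]
    show MvPolynomial.aeval (u • w₁ + w₂) P = _
    exact aux_aeval_eq_eval _ _


lemma aux_plane {F : Type*} [Field F] (ξ v : Fin 3 → F) (i : Fin 3)
    (hξ : ξ i ≠ 0) (hvi : v i = 0) (hv : v ≠ 0) :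
    ∃ m : Fin 3 → F, m ≠ 0 ∧
      ∀ x : Fin 3 → F, (∑ r, m r * x r = 0) → ∃ s t : F, x = s • ξ + t • v := by
  obtain ⟨j, hvj⟩ := Function.ne_iff.mp hv
  simp only [Pi.zero_apply] at hvj
  have hij : i ≠ j := by rintro rfl; exact hvj hvi
  obtain ⟨hil, hjl, hcov⟩ := aux_cover i j hij
  set l : Fin 3 := -(i + j) with hl
  set m : Fin 3 → F := fun r => if r = i then -(v l * ξ j - v j * ξ l) / ξ i
      else if r = j then v l else -(v j) with hm
  have hmi : m i = -(v l * ξ j - v j * ξ l) / ξ i := by simp [hm]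
  have hmj : m j = v l := by simp [hm, if_neg hij.symm]
  have hml : m l = -(v j) := by simp [hm, if_neg hil.symm, if_neg hjl.symm]
  refine ⟨m, ?_, ?_⟩
  · intro h0
    have := congrFun h0 l
    rw [hml] at this
    exact hvj (neg_eq_zero.mp this)
  · intro x hx
    rw [aux_sum3 _ i j l hij hil hjl, hmi, hmj, hml] at hx
    refine ⟨x i / ξ i, (x j - (x i / ξ i) * ξ j) / v j, ?_⟩
    funext r
    simp only [Pi.add_apply, Pi.smul_apply, smul_eq_mul]
    rcases hcov r with rfl | rfl | rfl
    · rw [hvi]; field_simp; ring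
    · field_simp; ring
    · field_simp
      field_simp at hx
      linear_combination (-1 : F) * hx

lemma aux_abi : ∀ i : Fin 3, i ≠ (if i = 0 then 1 else 0) ∧ i ≠ (if i = 2 then 1 else 2) ∧
    (if i = 0 then 1 else 0 : Fin 3) ≠ (if i = 2 then 1 else 2) ∧
    (∀ r : Fin 3, r = i ∨ r = (if i = 0 then 1 else 0) ∨ r = (if i = 2 then 1 else 2)) := by
  decide

theorem stmt_4 (k : ℕ) (hk : 1 ≤ k) :
    ∃ C : ℝ, 0 < C ∧
      ∀ (F : Type) [Field F] [Fintype F] [DecidableEq F]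
        (P : MvPolynomial (Fin 3) F), P ≠ 0 → P.IsHomogeneous k →
        ∀ H : Finset (Fin 3 → F), (∀ x, x ∈ H ↔ MvPolynomial.eval x P = 0) →
        (¬ ∃ m : Fin 3 → F, m ≠ 0 ∧
            (Finset.univ.filter (fun x : Fin 3 → F => ∑ i, m i * x i = 0)) ⊆ H) →
        ∀ ξ : Fin 3 → F, ξ ≠ 0 →
          ((((H ×ˢ H).filter (fun p => p.1 + p.2 = ξ)).card : ℝ)
              ≤ C * (Fintype.card F : ℝ))
          ∧ (((H ∩ H.image (fun x => x + ξ)).card : ℝ)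
              ≤ C * (Fintype.card F : ℝ)) := by
  classical
  refine ⟨3 * (k + 2) ^ 2, by positivity, ?_⟩
  intro F _ _ _ P hP0 hPhom H hH hplane ξ hξ
  set q := Fintype.card F with hq
  have hq1 : 1 ≤ q := Fintype.card_pos
  clear_value q
  set X : Finset (Fin 3 → F) :=
    univ.filter (fun x => eval x P = 0 ∧ eval (ξ - x) P = 0) with hX
  have hXmem : ∀ x, x ∈ X ↔ (eval x P = 0 ∧ eval (ξ - x) P = 0) := by
    intro x; simp [hX]
  clear_value X
  have hneg : ∀ w : Fin 3 → F, eval (-w) P = 0 ↔ eval w P = 0 := by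
    intro w
    have h1 : eval ((-1 : F) • w) P = (-1 : F) ^ k * eval w P := aux_eval_smul hPhom _ _
    rw [neg_one_smul] at h1
    rw [h1, mul_eq_zero]
    simp [pow_ne_zero k (neg_ne_zero.mpr (one_ne_zero : (1:F) ≠ 0))]
  -- the two cardinalities both equal X.card
  have hcard1 : ((H ×ˢ H).filter (fun p => p.1 + p.2 = ξ)).card = X.card := by
    apply Finset.card_nbij' (i := fun p => p.1) (j := fun x => (x, ξ - x))
    · rintro ⟨x, y⟩ hp
      simp only [Finset.mem_coe, Finset.mem_filter, Finset.mem_product] at hp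
      obtain ⟨⟨hx, hy⟩, hxy⟩ := hp
      rw [Finset.mem_coe, hXmem]
      exact ⟨(hH x).mp hx, by rw [show ξ - x = y by rw [← hxy]; abel]; exact (hH y).mp hy⟩
    · intro x hx
      rw [Finset.mem_coe, hXmem] at hx
      rw [Finset.mem_coe, Finset.mem_filter, Finset.mem_product]
      exact ⟨⟨(hH x).mpr hx.1, (hH _).mpr hx.2⟩, by show x + (ξ - x) = ξ; abel⟩
    · rintro ⟨x, y⟩ hp
      simp only [Finset.mem_coe, Finset.mem_filter, Finset.mem_product] at hp
      have : y = ξ - x := by rw [← hp.2]; abel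
      simp [this]
    · intro x hx; rfl
  have hcard2 : (H ∩ H.image (fun x => x + ξ)).card = X.card := by
    apply Finset.card_nbij' (i := fun z => ξ - z) (j := fun x => ξ - x)
    · intro z hz
      simp only [Finset.mem_coe, Finset.mem_inter, Finset.mem_image] at hz
      obtain ⟨hz1, w, hw, hwz⟩ := hz
      rw [Finset.mem_coe, hXmem]; dsimp only
      constructor
      · have : ξ - z = -w := by rw [← hwz]; abel
        rw [this, hneg]
        exact (hH w).mp hw
      · rw [show ξ - (ξ - z) = z by abel]
        exact (hH z).mp hz1
    · intro x hx
      rw [Finset.mem_coe, hXmem] at hx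
      simp only [Finset.mem_coe, Finset.mem_inter, Finset.mem_image]
      refine ⟨(hH _).mpr hx.2, -x, (hH _).mpr ((hneg x).mpr hx.1), by abel⟩
    · intro z _; exact sub_sub_cancel ξ z
    · intro x _; exact sub_sub_cancel ξ x
  rw [hcard1, hcard2]
  have main : (X.card : ℝ) ≤ 3 * (k + 2) ^ 2 * q := by
    by_cases hqs : q ≤ k + 1
    · -- small field case
      have h1 : X.card ≤ q ^ 3 := by
        calc X.card ≤ Fintype.card (Fin 3 → F) := Finset.card_le_univ X
        _ = q ^ 3 := by rw [hq]; simp [Fintype.card_fun]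
      have h2 : q ^ 3 ≤ 3 * (k + 2) ^ 2 * q := by
        have hqq : q * q ≤ 3 * (k + 2) ^ 2 := by nlinarith [Nat.mul_le_mul hqs hqs]
        calc q ^ 3 = q * q * q := by ring
          _ ≤ 3 * (k + 2) ^ 2 * q := Nat.mul_le_mul_right q hqq
      calc (X.card : ℝ) ≤ (q ^ 3 : ℕ) := by exact_mod_cast h1
      _ ≤ ((3 * (k + 2) ^ 2 * q : ℕ) : ℝ) := by exact_mod_cast h2
      _ = 3 * (k + 2) ^ 2 * q := by push_cast; ring
    · push_neg at hqs
      have hqk : k + 2 ≤ q := hqs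
      -- pick a coordinate where ξ is nonzero
      obtain ⟨i, hξi⟩ := Function.ne_iff.mp hξ
      simp only [Pi.zero_apply] at hξi
      obtain ⟨hia, hib, hab, hcov⟩ := aux_abi i
      set a : Fin 3 := if i = 0 then 1 else 0 with ha
      set b : Fin 3 := if i = 2 then 1 else 2 with hb
      set π : (Fin 3 → F) → (Fin 3 → F) := fun x => x - (x i / ξ i) • ξ with hπ
      have hπi : ∀ x, π x i = 0 := by
        intro x
        simp only [hπ, Pi.sub_apply, Pi.smul_apply, smul_eq_mul]
        field_simp
        simp
      have hπdec : ∀ x, x = (x i / ξ i) • ξ + π x := by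
        intro x; simp [hπ]
      clear_value π
      set X₀ := X.filter (fun x => π x = 0) with hX₀
      set X₁ := X.filter (fun x => ¬ π x = 0) with hX₁
      have hsplit : X₀.card + X₁.card = X.card :=
        Finset.card_filter_add_card_filter_not _
      clear_value X₀ X₁
      have h0 : X₀.card ≤ q := by
        have : X₀.card ≤ (univ : Finset F).card :=
          Finset.card_le_card_of_injOn (fun x => x i) (fun _ _ => Finset.mem_univ _) ?_
        · simpa [hq] using this
        · intro x hx y hy hxy
          have hxy' : x i = y i := hxy
          simp only [hX₀, Finset.mem_coe, Finset.mem_filter] at hx hy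
          have hx' : x = (x i / ξ i) • ξ := by
            have := hπdec x; rw [hx.2, add_zero] at this; exact this
          have hy' : y = (y i / ξ i) • ξ := by
            have := hπdec y; rw [hy.2, add_zero] at this; exact this
          rw [hx', hy', hxy']
      -- normalization map
      set T : (Fin 3 → F) → F := fun x => if π x a ≠ 0 then π x a else π x b with hT
      set cm : (Fin 3 → F) → (Fin 3 → F) := fun x => (T x)⁻¹ • π x with hcm
      have hTprop : ∀ x, π x ≠ 0 → T x ≠ 0 ∧ π x = T x • cm x ∧ cm x i = 0 ∧
          (cm x a = 1 ∨ (cm x a = 0 ∧ cm x b = 1)) := by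
        intro x hx
        have hTne : T x ≠ 0 := by
          by_cases hπa : π x a ≠ 0
          · simp only [hT, if_pos hπa]; exact hπa
          · push_neg at hπa
            simp only [hT, hπa, ne_eq, not_true_eq_false, if_neg, not_false_eq_true]
            obtain ⟨r, hr⟩ := Function.ne_iff.mp hx
            simp only [Pi.zero_apply] at hr
            rcases hcov r with rfl | rfl | rfl
            · exact absurd (hπi x) hr
            · exact absurd hπa hr
            · simpa [hT, hπa] using hr
        refine ⟨hTne, ?_, ?_, ?_⟩
        · rw [hcm]; simp [smul_smul, mul_inv_cancel₀ hTne]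
        · simp [hcm, hπi x]
        · by_cases hπa : π x a ≠ 0
          · left
            simp only [hcm, Pi.smul_apply, smul_eq_mul, hT, if_pos hπa]
            field_simp
          · right
            push_neg at hπa
            constructor
            · simp [hcm, hπa]
            · simp only [hcm, Pi.smul_apply, smul_eq_mul, hT, hπa, ne_eq,
                not_true_eq_false, if_neg, not_false_eq_true]
            -- T x = π x b here
              have hTb : T x = π x b := by simp [hT, hπa]
              have : π x b ≠ 0 := by rw [← hTb]; exact hTne
              field_simp
      clear_value T cm
      set V := X₁.image cm with hV
      clear_value V
      have hVcard : V.card ≤ q + 1 := by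
        have : V.card ≤ (univ : Finset (Option F)).card := by
          apply Finset.card_le_card_of_injOn
            (fun w => if w a = 1 then some (w b) else none)
            (fun _ _ => Finset.mem_univ _)
          intro w hw w' hw' hww'
          simp only [hV, Finset.coe_image, Set.mem_image, Finset.mem_coe] at hw hw'
          obtain ⟨x, hx, rfl⟩ := hw
          obtain ⟨x', hx', rfl⟩ := hw'
          dsimp only at hww'
          simp only [hX₁, Finset.mem_filter] at hx hx'
          obtain ⟨hT1, _, hi1, hn1⟩ := hTprop x hx.2
          obtain ⟨hT2, _, hi2, hn2⟩ := hTprop x' hx'.2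
          have ext3 : cm x i = cm x' i → cm x a = cm x' a → cm x b = cm x' b →
              cm x = cm x' := by
            intro e1 e2 e3; funext r
            rcases hcov r with rfl | rfl | rfl
            exacts [e1, e2, e3]
          rcases hn1 with h1 | ⟨h1, h1'⟩ <;> rcases hn2 with h2 | ⟨h2, h2'⟩
          · refine ext3 (by rw [hi1, hi2]) (by rw [h1, h2]) ?_
            rw [h1, h2, if_pos rfl, if_pos rfl] at hww'
            exact Option.some_injective _ hww'
          · rw [h1, h2, if_pos rfl, if_neg (by simp)] at hww'
            simp at hww'
          · rw [h1, h2, if_neg (by simp), if_pos rfl] at hww'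
            simp at hww'
          · exact ext3 (by rw [hi1, hi2]) (by rw [h1, h2]) (by rw [h1', h2'])
        simpa [hq, Fintype.card_option] using this
      -- per-fiber bound
      have hfiber : ∀ v ∈ V, (X₁.filter (fun x => cm x = v)).card ≤ k * k := by
        intro v hv
        rw [hV] at hv
        obtain ⟨x₀, hx₀, rfl⟩ := Finset.mem_image.mp hv
        rw [hX₁, Finset.mem_filter] at hx₀
        have hπx₀ : π x₀ ≠ 0 := hx₀.2
        obtain ⟨hT₀, hdec₀, hvi, -⟩ := hTprop x₀ hπx₀
        set v := cm x₀ with hvdef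
        clear_value v
        have hvne : v ≠ 0 := by
          intro h
          rw [h, smul_zero] at hdec₀
          exact hπx₀ hdec₀
        obtain ⟨h, hdeg, heval⟩ := aux_line_poly hPhom ξ v
        have hAeq : ∀ s τ : F, τ ≠ 0 →
            eval (s • ξ + τ • v) P = τ ^ k * h.eval (s / τ) := by
          intro s τ hτ
          have hx : s • ξ + τ • v = τ • ((s / τ) • ξ + v) := by
            have hts : τ * (s / τ) = s := by field_simp
            rw [smul_add, smul_smul, hts]
          rw [hx, aux_eval_smul hPhom, heval]
        have hhne : h ≠ 0 := by
          intro h0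
          have hvan : ∀ u : F, h.eval u = 0 := by
            intro u; rw [h0, Polynomial.eval_zero]
          have hall : ∀ s τ : F, eval (s • ξ + τ • v) P = 0 := by
            intro s τ
            obtain ⟨g, gdeg, geval⟩ := aux_line_poly hPhom v (s • ξ)
            have gzero : g = 0 := by
              apply Polynomial.eq_zero_of_natDegree_lt_card_of_eval_eq_zero' g
                ((univ : Finset F).erase 0)
              · intro τ' hτ'
                rw [geval, add_comm, hAeq s τ' (Finset.ne_of_mem_erase hτ'), hvan, mul_zero]
              · have hc : ((univ : Finset F).erase 0).card = q - 1 := by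
                  rw [Finset.card_erase_of_mem (Finset.mem_univ _), Finset.card_univ, ← hq]
                rw [hc]
                omega
            have := geval τ
            rw [gzero, Polynomial.eval_zero, add_comm] at this
            exact this.symm
          obtain ⟨m, hm0, hmem⟩ := aux_plane ξ v i hξi hvi hvne
          apply hplane
          refine ⟨m, hm0, fun x hx => ?_⟩
          rw [Finset.mem_filter] at hx
          obtain ⟨s, t, rfl⟩ := hmem x hx.2
          exact (hH _).mpr (hall s t)
        set R : Finset F := h.roots.toFinset with hRdef
        have hRk : R.card ≤ k := by
          rw [hRdef]
          exact le_trans (Multiset.toFinset_card_le _)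
            (le_trans (Polynomial.card_roots' h) hdeg)
        have hmemR : ∀ u : F, h.eval u = 0 → u ∈ R := by
          intro u hu
          rw [hRdef]
          exact Multiset.mem_toFinset.mpr (Polynomial.mem_roots'.mpr ⟨hhne, hu⟩)
        clear_value R
        calc (X₁.filter (fun x => cm x = v)).card ≤ (R ×ˢ R).card := by
              apply Finset.card_le_card_of_injOn
                (fun x => (x i / ξ i / T x, (x i / ξ i - 1) / T x))
              · intro x hx
                rw [Finset.mem_coe, Finset.mem_filter] at hx
                obtain ⟨hx1, hcmx⟩ := hx
                rw [hX₁, Finset.mem_filter, hXmem] at hx1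
                obtain ⟨⟨hpx, hpξx⟩, hπx⟩ := hx1
                obtain ⟨hTx, hdecx, -, -⟩ := hTprop x hπx
                rw [hcmx] at hdecx
                have hxeq : x = (x i / ξ i) • ξ + T x • v := by
                  have e := hπdec x
                  rw [hdecx] at e
                  exact e
                have r1 : h.eval (x i / ξ i / T x) = 0 := by
                  have e := hAeq (x i / ξ i) (T x) hTx
                  rw [← hxeq, hpx] at e
                  exact (mul_eq_zero.mp e.symm).resolve_left (pow_ne_zero _ hTx)
                have r2 : h.eval ((x i / ξ i - 1) / T x) = 0 := by
                  have hξx : ξ - x = (1 - x i / ξ i) • ξ + (-(T x)) • v := by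
                    conv_lhs => rw [hxeq]
                    module
                  have e := hAeq (1 - x i / ξ i) (-(T x)) (neg_ne_zero.mpr hTx)
                  rw [← hξx, hpξx] at e
                  have hu : (1 - x i / ξ i) / (-(T x)) = (x i / ξ i - 1) / T x := by
                    rw [div_neg, ← neg_div, neg_sub]
                  rw [hu] at e
                  exact (mul_eq_zero.mp e.symm).resolve_left
                    (pow_ne_zero _ (neg_ne_zero.mpr hTx))
                exact Finset.mem_product.mpr ⟨hmemR _ r1, hmemR _ r2⟩
              · intro x hx y hy hxy
                rw [Finset.mem_coe, Finset.mem_filter] at hx hy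
                obtain ⟨hx1, hcmx⟩ := hx
                obtain ⟨hy1, hcmy⟩ := hy
                rw [hX₁, Finset.mem_filter] at hx1 hy1
                obtain ⟨hTx, hdecx, -, -⟩ := hTprop x hx1.2
                obtain ⟨hTy, hdecy, -, -⟩ := hTprop y hy1.2
                rw [hcmx] at hdecx
                rw [hcmy] at hdecy
                simp only [Prod.mk.injEq] at hxy
                obtain ⟨e1, e2⟩ := hxy
                have h4 : (1 : F) / T x = 1 / T y := by
                  have e3 : x i / ξ i / T x - (x i / ξ i - 1) / T x
                      = y i / ξ i / T y - (y i / ξ i - 1) / T y := by rw [e1, e2]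
                  rw [div_sub_div_same, div_sub_div_same, sub_sub_cancel, sub_sub_cancel] at e3
                  exact e3
                have eT : T x = T y := by
                  rw [one_div, one_div] at h4
                  exact inv_injective h4
                have eA : x i / ξ i = y i / ξ i := by
                  rw [eT, div_eq_div_iff hTy hTy] at e1
                  exact mul_right_cancel₀ hTy e1
                have hxeq : x = (x i / ξ i) • ξ + T x • v := by
                  have e := hπdec x
                  rw [hdecx] at e
                  exact e
                have hyeq : y = (y i / ξ i) • ξ + T y • v := by
                  have e := hπdec y
                  rw [hdecy] at e
                  exact e
                rw [hxeq, hyeq, eA, eT]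
          _ = R.card * R.card := Finset.card_product R R
          _ ≤ k * k := Nat.mul_le_mul hRk hRk
      have h1 : X₁.card ≤ (q + 1) * (k * k) := by
        rw [Finset.card_eq_sum_card_fiberwise
          (fun x hx => by rw [hV]; exact Finset.mem_image_of_mem cm hx :
            ∀ x ∈ X₁, cm x ∈ V)]
        calc ∑ v ∈ V, (X₁.filter (fun x => cm x = v)).card
            ≤ ∑ _v ∈ V, k * k := Finset.sum_le_sum hfiber
          _ = V.card * (k * k) := by rw [Finset.sum_const, smul_eq_mul]
          _ ≤ (q + 1) * (k * k) := Nat.mul_le_mul_right _ hVcard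
      have htot : X.card ≤ q + (q + 1) * (k * k) := by
        rw [← hsplit]; omega
      have : X.card ≤ 3 * (k + 2) ^ 2 * q := by
        calc X.card ≤ q + (q + 1) * (k * k) := htot
          _ ≤ q + (2 * q) * (k * k) := by
              apply Nat.add_le_add_left
              exact Nat.mul_le_mul_right _ (by omega)
          _ ≤ 3 * (k + 2) ^ 2 * q := by nlinarith
      calc (X.card : ℝ) ≤ ((3 * (k + 2) ^ 2 * q : ℕ) : ℝ) := by exact_mod_cast this
        _ = 3 * (k + 2) ^ 2 * q := by push_cast; ring
  exact ⟨main, main⟩
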